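/- arXiv:2009.13455 — 9 statements merged into one kernel-verified Lean document; each statement's English description precedes it below -/
import Mathlib

section
/- Let μ₁, μ₂ > 0 with μ₁ ≠ μ₂, and let r₁, r₂ > 0 with r₁ + r₂ fixed. If κ > 0 and μ₁ sin(√κ r₁) = μ₂ sin(√κ r₂) and also μ₁ r₁ = μ₂ r₂ with r₁ + r₂ < π/√κ, then a contradiction follows; i.e., for distinct masses the relativistic lever rule and the proportional rule μ₁r₁ = μ₂r₂ cannot both hold for positive r₁, r₂ with √κ(r₁+r₂) < π. -/
open Real

/-- `sin` is strictly "sub-linear-from-above" on `(0, π)`: for `0 < a < b < π`,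
`a * sin b < b * sin a`, by strict concavity of `sin` on `[0, π]`. -/
lemma sinc_strict_key {a b : ℝ} (ha : 0 < a) (hab : a < b) (hb : b < π) :
    a * Real.sin b < b * Real.sin a := by
  have hbpos : 0 < b := ha.trans hab
  have h0 : (0 : ℝ) ∈ Set.Icc 0 π := ⟨le_rfl, Real.pi_pos.le⟩
  have hbmem : b ∈ Set.Icc 0 π := ⟨hbpos.le, hb.le⟩
  have hne : (0 : ℝ) ≠ b := ne_of_lt hbpos
  set t : ℝ := a / b with ht
  have htpos : 0 < t := div_pos ha hbpos
  have ht1 : t < 1 := (div_lt_one hbpos).2 hab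
  have h := strictConcaveOn_sin_Icc.2 h0 hbmem hne (by linarith : (0:ℝ) < 1 - t) htpos
    (by ring)
  simp only [smul_eq_mul, mul_zero, Real.sin_zero, zero_add] at h
  -- h : (1 - t) * sin 0 + t * sin b < sin (t * b), simplified
  have htb : t * b = a := div_mul_cancel₀ a (ne_of_gt hbpos)
  rw [htb] at h
  -- h : t * sin b < sin a  (after simp cleaned (1-t)*0)
  have : a / b * Real.sin b < Real.sin a := by linarith [h]
  calc a * Real.sin b = b * (a / b * Real.sin b) := by field_simp
    _ < b * Real.sin a := by exact (mul_lt_mul_iff_right₀ hbpos).2 this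

/-- For distinct masses on a sphere of curvature `κ > 0`, the relativistic
lever rule and the proportional rule `μ₁ r₁ = μ₂ r₂` are incompatible. -/
theorem lever_vs_collision_sphere (μ₁ μ₂ r₁ r₂ κ : ℝ)
    (hμ₁ : 0 < μ₁) (hμ₂ : 0 < μ₂) (hμ : μ₁ ≠ μ₂)
    (hr₁ : 0 < r₁) (hr₂ : 0 < r₂) (hκ : 0 < κ)
    (hC1 : μ₁ * Real.sin (Real.sqrt κ * r₁) = μ₂ * Real.sin (Real.sqrt κ * r₂))
    (hC2 : μ₁ * r₁ = μ₂ * r₂)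
    (hr : r₁ + r₂ < π / Real.sqrt κ) : False := by
  have hs : 0 < Real.sqrt κ := Real.sqrt_pos.2 hκ
  set x₁ := Real.sqrt κ * r₁ with hx₁
  set x₂ := Real.sqrt κ * r₂ with hx₂
  have hx₁p : 0 < x₁ := mul_pos hs hr₁
  have hx₂p : 0 < x₂ := mul_pos hs hr₂
  have hsum : x₁ + x₂ < π := by
    have := (lt_div_iff₀ hs).1 hr
    nlinarith
  have hC2' : μ₁ * x₁ = μ₂ * x₂ := by
    rw [hx₁, hx₂]; nlinarith
  have hcross : x₂ * Real.sin x₁ = x₁ * Real.sin x₂ := by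
    have h1 : μ₁ * (x₂ * Real.sin x₁) = μ₁ * (x₁ * Real.sin x₂) := by
      linear_combination x₂ * hC1 - Real.sin x₂ * hC2'
    exact mul_left_cancel₀ (ne_of_gt hμ₁) h1
  rcases lt_trichotomy x₁ x₂ with h | h | h
  · have := sinc_strict_key hx₁p h (by linarith)
    linarith
  · have : μ₁ = μ₂ := by
      have := hC2'
      rw [h] at this
      exact mul_right_cancel₀ (ne_of_gt hx₂p) this
    exact hμ this
  · have := sinc_strict_key hx₂p h (by linarith)
    linarith
end

section
/- Let μ₁, μ₂ > 0 with μ₁ ≠ μ₂, and r₁, r₂ > 0. If μ₁ sinh r₁ = μ₂ sinh r₂ and μ₁ r₁ = μ₂ r₂, then a contradiction follows. Hence on hyperbolic space (κ = -1) the relativistic lever rule (C1) and the collision-point rule (C2) determine different points for distinct masses. -/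
open Real

lemma strictConvexOn_sinh' : StrictConvexOn ℝ (Set.Ici (0:ℝ)) Real.sinh := by
  apply strictConvexOn_of_deriv2_pos (convex_Ici 0) Real.continuous_sinh.continuousOn
  intro x hx
  rw [interior_Ici] at hx
  have : deriv (deriv Real.sinh) x = Real.sinh x := by
    simp [Real.deriv_sinh, Real.deriv_cosh]
  rw [show (deriv^[2] Real.sinh) x = deriv (deriv Real.sinh) x from rfl, this]
  exact (Real.sinh_pos_iff).2 hx

lemma sinh_div_strictMono {a b : ℝ} (ha : 0 < a) (hab : a < b) :
    Real.sinh a / a < Real.sinh b / b := by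
  have := strictConvexOn_sinh'.secant_strict_mono (a := 0) (x := a) (y := b)
    (Set.self_mem_Ici) (le_of_lt ha) (le_of_lt (ha.trans hab)) ha.ne' (ha.trans hab).ne' hab
  simpa [Real.sinh_zero] using this

/-- On hyperbolic space (κ = -1), the lever rule `μ₁ sinh r₁ = μ₂ sinh r₂`
and the collision rule `μ₁ r₁ = μ₂ r₂` are incompatible for distinct masses. -/
theorem lever_vs_collision_hyperbolic (μ₁ μ₂ r₁ r₂ : ℝ)
    (hμ₁ : 0 < μ₁) (hμ₂ : 0 < μ₂) (hμ : μ₁ ≠ μ₂)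
    (hr₁ : 0 < r₁) (hr₂ : 0 < r₂)
    (hC1 : μ₁ * Real.sinh r₁ = μ₂ * Real.sinh r₂)
    (hC2 : μ₁ * r₁ = μ₂ * r₂) : False := by
  have hsd : Real.sinh r₁ / r₁ = Real.sinh r₂ / r₂ := by
    field_simp
    nlinarith [Real.sinh_pos_iff.2 hr₁, Real.sinh_pos_iff.2 hr₂]
  have hr : r₁ = r₂ := by
    rcases lt_trichotomy r₁ r₂ with h | h | h
    · exact absurd hsd (ne_of_lt (sinh_div_strictMono hr₁ h))
    · exact h
    · exact absurd hsd.symm (ne_of_lt (sinh_div_strictMono hr₂ h))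
  apply hμ
  subst hr
  exact mul_right_cancel₀ hr₁.ne' hC2
end

section
/- Let μ₁, μ₂ > 0 with μ₁ ≠ μ₂, and r₁, r₂ > 0. If μ₁ sinh(2r₁) = μ₂ sinh(2r₂) and μ₁ sinh r₁ = μ₂ sinh r₂, then a contradiction follows. Hence on hyperbolic space the steady-rotation rule (C3) and the lever rule (C1) determine different points for distinct masses. -/
open Real

/-- On hyperbolic space, the steady-rotation rule `μ₁ sinh (2r₁) = μ₂ sinh (2r₂)`
and the lever rule `μ₁ sinh r₁ = μ₂ sinh r₂` are incompatible for distinct masses. -/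
theorem rotation_vs_lever_hyperbolic (μ₁ μ₂ r₁ r₂ : ℝ)
    (hμ₁ : 0 < μ₁) (hμ₂ : 0 < μ₂) (hμ : μ₁ ≠ μ₂)
    (hr₁ : 0 < r₁) (hr₂ : 0 < r₂)
    (hC3 : μ₁ * Real.sinh (2 * r₁) = μ₂ * Real.sinh (2 * r₂))
    (hC1 : μ₁ * Real.sinh r₁ = μ₂ * Real.sinh r₂) : False := by
  have hs₁ : 0 < Real.sinh r₁ := Real.sinh_pos_iff.mpr hr₁
  have hs₂ : 0 < Real.sinh r₂ := Real.sinh_pos_iff.mpr hr₂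
  rw [Real.sinh_two_mul, Real.sinh_two_mul] at hC3
  have hcosh : Real.cosh r₁ = Real.cosh r₂ := by
    have h1 : μ₁ * Real.sinh r₁ * Real.cosh r₁ = μ₂ * Real.sinh r₂ * Real.cosh r₂ := by
      nlinarith [hC3]
    rw [hC1] at h1
    have : 0 < μ₂ * Real.sinh r₂ := by positivity
    exact mul_left_cancel₀ this.ne' h1
  have hr : r₁ = r₂ := by
    have := Real.cosh_strictMonoOn.injOn (Set.mem_Ici.mpr hr₁.le) (Set.mem_Ici.mpr hr₂.le) hcosh
    exact this
  rw [hr] at hC1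
  exact hμ (mul_right_cancel₀ hs₂.ne' hC1)
end

section
/- For fixed μ₁, μ₂ > 0 and fixed r with 0 < r < π, there exists a unique pair (r₁, r₂) with r₁, r₂ > 0, r₁ + r₂ = r, and μ₁ sin r₁ = μ₂ sin r₂. -/
open Real

/-- Existence and uniqueness of the spherical lever-rule centre of mass
for non-antipodal configurations. -/
theorem lever_spherical_exists_unique (μ₁ μ₂ r : ℝ)
    (hμ₁ : 0 < μ₁) (hμ₂ : 0 < μ₂) (hr : 0 < r) (hrπ : r < π) :
    ∃! p : ℝ × ℝ, 0 < p.1 ∧ 0 < p.2 ∧ p.1 + p.2 = r ∧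
      μ₁ * Real.sin p.1 = μ₂ * Real.sin p.2 := by
  have hsinr : 0 < Real.sin r := Real.sin_pos_of_pos_of_lt_pi hr hrπ
  set f : ℝ → ℝ := fun x => μ₁ * Real.sin x - μ₂ * Real.sin (r - x) with hf
  have hcont : ContinuousOn f (Set.Icc 0 r) := by fun_prop
  have hf0 : f 0 = -(μ₂ * Real.sin r) := by simp [hf]
  have hfr : f r = μ₁ * Real.sin r := by simp [hf]
  have h0 : (0 : ℝ) ∈ Set.Icc (f 0) (f r) := by
    constructor
    · rw [hf0]; nlinarith
    · rw [hfr]; nlinarith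
  obtain ⟨c, hc, hfc⟩ := intermediate_value_Icc hr.le hcont h0
  have hc0 : 0 < c := by
    rcases lt_or_eq_of_le hc.1 with h | h
    · exact h
    · exfalso; rw [← h] at hfc; rw [hf0] at hfc; nlinarith
  have hcr : c < r := by
    rcases lt_or_eq_of_le hc.2 with h | h
    · exact h
    · exfalso; rw [h] at hfc; rw [hfr] at hfc; nlinarith
  refine ⟨(c, r - c), ⟨hc0, by simpa using hcr, by ring, by
    simp only [hf] at hfc; linarith⟩, ?_⟩
  rintro ⟨a, b⟩ ⟨ha, hb, hab, heq⟩
  simp only at ha hb hab heq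
  -- show a = c, b = r - c
  have hkey : ∀ x y : ℝ, 0 < x → 0 < y → x + y = r →
      μ₁ * Real.sin x = μ₂ * Real.sin y → x = c := by
    intro x y hx hy hxy he
    have he' : μ₁ * Real.sin x = μ₂ * Real.sin (r - x) := by
      rw [show r - x = y by linarith]; exact he
    have hc' : μ₁ * Real.sin c = μ₂ * Real.sin (r - c) := by
      simp only [hf] at hfc; linarith
    -- μ₂ * sin(r-x) * sin c = μ₂ * sin(r-c) * sin x, via μ₁ sin x sin c
    have hmul : Real.sin (r - x) * Real.sin c = Real.sin (r - c) * Real.sin x := by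
      have h : μ₂ * (Real.sin (r - x) * Real.sin c) = μ₂ * (Real.sin (r - c) * Real.sin x) := by
        linear_combination (Real.sin x) * hc' - (Real.sin c) * he'
      exact mul_left_cancel₀ hμ₂.ne' h
    rw [Real.sin_sub, Real.sin_sub] at hmul
    have hsd : Real.sin r * Real.sin (c - x) = 0 := by
      rw [Real.sin_sub]; ring_nf; ring_nf at hmul; linarith
    have : Real.sin (c - x) = 0 := by
      rcases mul_eq_zero.mp hsd with h | h
      · exact absurd h hsinr.ne'
      · exact h
    have h1 : -π < c - x := by linarith
    have h2 : c - x < π := by linarith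
    have := Real.sin_eq_zero_iff_of_lt_of_lt h1 h2 |>.mp this
    linarith
  have hxa : a = c := hkey a b ha hb hab heq
  have : b = r - c := by linarith
  simp [hxa, this]
end

section
/- Let μ₁, μ₂ > 0 with μ₁ ≠ μ₂ and let 0 < r < π/2. Then there exists exactly one pair (r₁, r₂) with r₁, r₂ > 0, r₁ + r₂ = r, and μ₁ sin(2r₁) = μ₂ sin(2r₂). -/
open Real

/-- Existence and uniqueness of the steady-rotation centre on the unit sphere
when the masses subtend an acute arc (`0 < r < π/2`). -/
theorem rotation_sphere_acute_exists_unique (μ₁ μ₂ r : ℝ)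
    (hμ₁ : 0 < μ₁) (hμ₂ : 0 < μ₂) (hμ : μ₁ ≠ μ₂)
    (hr : 0 < r) (hrπ : r < π / 2) :
    ∃! p : ℝ × ℝ, 0 < p.1 ∧ 0 < p.2 ∧ p.1 + p.2 = r ∧
      μ₁ * Real.sin (2 * p.1) = μ₂ * Real.sin (2 * p.2) := by
  have hsin2r : 0 < Real.sin (2 * r) :=
    Real.sin_pos_of_pos_of_lt_pi (by linarith) (by linarith [Real.pi_pos])
  -- the function for the intermediate value theorem
  set f : ℝ → ℝ := fun x => μ₁ * Real.sin (2 * x) - μ₂ * Real.sin (2 * (r - x)) with hf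
  have hcont : ContinuousOn f (Set.Icc 0 r) := by
    apply Continuous.continuousOn; continuity
  have hf0 : f 0 = -(μ₂ * Real.sin (2 * r)) := by simp [hf]
  have hfr : f r = μ₁ * Real.sin (2 * r) := by simp [hf]
  have hmem : (0 : ℝ) ∈ Set.Ioo (f 0) (f r) := by
    rw [hf0, hfr]
    constructor
    · nlinarith
    · nlinarith
  obtain ⟨x, hx, hfx⟩ := intermediate_value_Ioo (le_of_lt hr) hcont hmem
  -- key uniqueness lemma
  have key : ∀ x y : ℝ, 0 < x → x < r → 0 < y → y < r →
      μ₁ * Real.sin (2 * x) = μ₂ * Real.sin (2 * (r - x)) →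
      μ₁ * Real.sin (2 * y) = μ₂ * Real.sin (2 * (r - y)) → x = y := by
    intro x y hx0 hxr hy0 hyr h1 h2
    have e : Real.sin (2 * x) * Real.sin (2 * (r - y)) -
        Real.sin (2 * y) * Real.sin (2 * (r - x)) =
        Real.sin (2 * r) * Real.sin (2 * x - 2 * y) := by
      have e1 : (2 : ℝ) * (r - y) = 2 * r - 2 * y := by ring
      have e2 : (2 : ℝ) * (r - x) = 2 * r - 2 * x := by ring
      rw [e1, e2, Real.sin_sub, Real.sin_sub, Real.sin_sub]
      ring
    have h3 : μ₁ * (Real.sin (2 * x) * Real.sin (2 * (r - y))) =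
        μ₂ * (Real.sin (2 * (r - x)) * Real.sin (2 * (r - y))) := by
      rw [← mul_assoc, h1, mul_assoc]
    have h4 : μ₁ * (Real.sin (2 * y) * Real.sin (2 * (r - x))) =
        μ₂ * (Real.sin (2 * (r - y)) * Real.sin (2 * (r - x))) := by
      rw [← mul_assoc, h2, mul_assoc]
    have h5 : μ₁ * (Real.sin (2 * r) * Real.sin (2 * x - 2 * y)) = 0 := by
      rw [← e]; nlinarith [h3, h4]
    have h6 : Real.sin (2 * x - 2 * y) = 0 := by
      rcases mul_eq_zero.mp h5 with h | h
      · exact absurd h hμ₁.ne'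
      · rcases mul_eq_zero.mp h with h' | h'
        · exact absurd h' hsin2r.ne'
        · exact h'
    have h7 : 2 * x - 2 * y = 0 := by
      have hlt1 : -π < 2 * x - 2 * y := by linarith
      have hlt2 : 2 * x - 2 * y < π := by linarith
      exact (Real.sin_eq_zero_iff_of_lt_of_lt hlt1 hlt2).mp h6
    linarith
  refine ⟨⟨x, r - x⟩, ⟨hx.1, by simp; linarith [hx.2], by ring, by
    simp only []
    have : μ₁ * Real.sin (2 * x) - μ₂ * Real.sin (2 * (r - x)) = 0 := hfx
    linarith⟩, ?_⟩
  rintro ⟨a, b⟩ ⟨ha, hb, hab, heq⟩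
  simp only [] at ha hb hab heq ⊢
  have hb' : b = r - a := by linarith
  subst hb'
  have hax : a = x := by
    apply key a x ha (by linarith) hx.1 hx.2
    · exact heq
    · have : μ₁ * Real.sin (2 * x) - μ₂ * Real.sin (2 * (r - x)) = 0 := hfx
      linarith
  subst hax
  rfl
end

section
/- Let μ₁, μ₂ > 0 and suppose r₁, r₂ > 0 satisfy both μ₁ sin r₁ = μ₂ sin r₂ and μ₁ sin(2r₁) = μ₂ sin(2r₂), with r₁ + r₂ < π/2. Then μ₁ = μ₂ and r₁ = r₂. -/
open Real

/-- On the unit sphere with an acute arc, the lever rule (C1) and the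
steady-rotation rule (C3) agree only for equal masses. -/
theorem lever_eq_rotation_sphere_only_equal_masses (μ₁ μ₂ r₁ r₂ : ℝ)
    (hμ₁ : 0 < μ₁) (hμ₂ : 0 < μ₂)
    (hr₁ : 0 < r₁) (hr₂ : 0 < r₂)
    (hC1 : μ₁ * Real.sin r₁ = μ₂ * Real.sin r₂)
    (hC3 : μ₁ * Real.sin (2 * r₁) = μ₂ * Real.sin (2 * r₂))
    (hr : r₁ + r₂ < π / 2) :
    μ₁ = μ₂ ∧ r₁ = r₂ := by
  have h1lt : r₁ < π / 2 := by linarith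
  have h2lt : r₂ < π / 2 := by linarith
  have hs1 : 0 < Real.sin r₁ := Real.sin_pos_of_pos_of_lt_pi hr₁ (by linarith [Real.pi_pos])
  have hs2 : 0 < Real.sin r₂ := Real.sin_pos_of_pos_of_lt_pi hr₂ (by linarith [Real.pi_pos])
  rw [Real.sin_two_mul, Real.sin_two_mul] at hC3
  have hcos : Real.cos r₁ = Real.cos r₂ := by
    have h : (μ₁ * Real.sin r₁) * Real.cos r₁ = (μ₂ * Real.sin r₂) * Real.cos r₂ := by
      ring_nf; ring_nf at hC3; linarith
    rw [hC1] at h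
    exact mul_left_cancel₀ (by positivity) h
  have hreq : r₁ = r₂ := by
    have := Real.injOn_cos ⟨le_of_lt hr₁, by linarith [Real.pi_pos]⟩ ⟨le_of_lt hr₂, by linarith [Real.pi_pos]⟩ hcos
    exact this
  refine ⟨?_, hreq⟩
  rw [hreq] at hC1
  exact mul_right_cancel₀ (ne_of_gt hs2) hC1
end

section
/- Let α₁, α₂ ∈ (0, ∞), ω ≠ 0, μ₁, μ₂ > 0, K = diag(1,1,-1). Define q₁(t) = R(ωt)·(0, -sinh α₁, cosh α₁)ᵀ and q₂(t) = R(ωt)·(0, sinh α₂, cosh α₂)ᵀ, where R(θ) is Euclidean rotation by angle θ about the z-axis. Then J(t) = μ₁ (K q₁(t)) × (K q̇₁(t)) + μ₂ (K q₂(t)) × (K q̇₂(t)) equals (-ω/2)·(-(μ₁ sinh 2α₁ - μ₂ sinh 2α₂) sin ωt, (μ₁ sinh 2α₁ - μ₂ sinh 2α₂) cos ωt, -2(μ₁ sinh²α₁ + μ₂ sinh²α₂)), and J(t) is constant in t if and only if μ₁ sinh 2α₁ = μ₂ sinh 2α₂. -/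
open Real Matrix

/-- Momentum of a uniformly rotating two-body configuration on the hyperboloid
(curvature -1), and its conservation criterion. -/
theorem momentum_rotating_hyperboloid (μ₁ μ₂ α₁ α₂ ω : ℝ)
    (hμ₁ : 0 < μ₁) (hμ₂ : 0 < μ₂)
    (hα₁ : 0 < α₁) (hα₂ : 0 < α₂) (hω : ω ≠ 0) :
    let K : Matrix (Fin 3) (Fin 3) ℝ := Matrix.diagonal ![1, 1, -1]
    let R : ℝ → Matrix (Fin 3) (Fin 3) ℝ := fun θ =>
      !![Real.cos θ, -Real.sin θ, 0; Real.sin θ, Real.cos θ, 0; 0, 0, 1]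
    let q₁ : ℝ → Fin 3 → ℝ := fun t => (R (ω * t)).mulVec ![0, -Real.sinh α₁, Real.cosh α₁]
    let q₂ : ℝ → Fin 3 → ℝ := fun t => (R (ω * t)).mulVec ![0, Real.sinh α₂, Real.cosh α₂]
    let J : ℝ → Fin 3 → ℝ := fun t =>
      μ₁ • ((K.mulVec (q₁ t)) ⨯₃ (K.mulVec (deriv q₁ t))) +
      μ₂ • ((K.mulVec (q₂ t)) ⨯₃ (K.mulVec (deriv q₂ t)))
    (∀ t : ℝ, J t = (-ω / 2) •
      ![-(μ₁ * Real.sinh (2 * α₁) - μ₂ * Real.sinh (2 * α₂)) * Real.sin (ω * t),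
        (μ₁ * Real.sinh (2 * α₁) - μ₂ * Real.sinh (2 * α₂)) * Real.cos (ω * t),
        -2 * (μ₁ * Real.sinh α₁ ^ 2 + μ₂ * Real.sinh α₂ ^ 2)]) ∧
    ((∀ t s : ℝ, J t = J s) ↔
      μ₁ * Real.sinh (2 * α₁) = μ₂ * Real.sinh (2 * α₂)) := by
  intro K R q₁ q₂ J
  have hq1 : q₁ = fun t => ![Real.sinh α₁ * Real.sin (ω * t),
      -(Real.sinh α₁ * Real.cos (ω * t)), Real.cosh α₁] := by
    funext t i
    fin_cases i <;>
      simp [q₁, R, Matrix.mulVec, dotProduct, Fin.sum_univ_three]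
  have hq2 : q₂ = fun t => ![-(Real.sinh α₂ * Real.sin (ω * t)),
      Real.sinh α₂ * Real.cos (ω * t), Real.cosh α₂] := by
    funext t i
    fin_cases i <;>
      simp [q₂, R, Matrix.mulVec, dotProduct, Fin.sum_univ_three]
  have hsin : ∀ t : ℝ, HasDerivAt (fun t => Real.sin (ω * t)) (ω * Real.cos (ω * t)) t := by
    intro t
    simpa [mul_comm, Function.comp_def] using
      (Real.hasDerivAt_sin (ω * t)).comp t ((hasDerivAt_id t).const_mul ω)
  have hcos : ∀ t : ℝ, HasDerivAt (fun t => Real.cos (ω * t)) (-(ω * Real.sin (ω * t))) t := by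
    intro t
    have := (Real.hasDerivAt_cos (ω * t)).comp t ((hasDerivAt_id t).const_mul ω)
    simpa [mul_comm, Function.comp_def] using this
  have hd1 : ∀ t, deriv q₁ t = ![Real.sinh α₁ * (ω * Real.cos (ω * t)),
      Real.sinh α₁ * (ω * Real.sin (ω * t)), 0] := by
    intro t
    rw [hq1]
    have : HasDerivAt (fun t => ![Real.sinh α₁ * Real.sin (ω * t),
        -(Real.sinh α₁ * Real.cos (ω * t)), Real.cosh α₁] : ℝ → Fin 3 → ℝ)
        (![Real.sinh α₁ * (ω * Real.cos (ω * t)),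
        Real.sinh α₁ * (ω * Real.sin (ω * t)), 0]) t := by
      rw [hasDerivAt_pi]
      intro i
      fin_cases i <;> simp
      · exact (hsin t).const_mul _
      · simpa [mul_comm, neg_neg, mul_neg] using ((hcos t).const_mul (Real.sinh α₁)).fun_neg
      · exact hasDerivAt_const t _
    exact this.deriv
  have hd2 : ∀ t, deriv q₂ t = ![-(Real.sinh α₂ * (ω * Real.cos (ω * t))),
      -(Real.sinh α₂ * (ω * Real.sin (ω * t))), 0] := by
    intro t
    rw [hq2]
    have : HasDerivAt (fun t => ![-(Real.sinh α₂ * Real.sin (ω * t)),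
        Real.sinh α₂ * Real.cos (ω * t), Real.cosh α₂] : ℝ → Fin 3 → ℝ)
        (![-(Real.sinh α₂ * (ω * Real.cos (ω * t))),
        -(Real.sinh α₂ * (ω * Real.sin (ω * t))), 0]) t := by
      rw [hasDerivAt_pi]
      intro i
      fin_cases i <;> simp
      · exact ((hsin t).const_mul (Real.sinh α₂)).neg
      · simpa [mul_comm, mul_neg] using (hcos t).const_mul (Real.sinh α₂)
      · exact hasDerivAt_const t _
    exact this.deriv
  have hmain : ∀ t : ℝ, J t = (-ω / 2) •
      ![-(μ₁ * Real.sinh (2 * α₁) - μ₂ * Real.sinh (2 * α₂)) * Real.sin (ω * t),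
        (μ₁ * Real.sinh (2 * α₁) - μ₂ * Real.sinh (2 * α₂)) * Real.cos (ω * t),
        -2 * (μ₁ * Real.sinh α₁ ^ 2 + μ₂ * Real.sinh α₂ ^ 2)] := by
    intro t
    have hs1 := Real.sin_sq_add_cos_sq (ω * t)
    simp only [J]
    rw [hd1 t, hd2 t, hq1, hq2]
    simp only []
    funext i
    fin_cases i
    · simp [K, crossProduct, Matrix.mulVec_diagonal, Real.sinh_two_mul]; ring
    · simp [K, crossProduct, Matrix.mulVec_diagonal, Real.sinh_two_mul]; ring
    · simp [K, crossProduct, Matrix.mulVec_diagonal, Real.sinh_two_mul]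
      ring_nf
      linear_combination (ω * (μ₁ * Real.sinh α₁ ^ 2 + μ₂ * Real.sinh α₂ ^ 2)) * hs1
  refine ⟨hmain, ?_, ?_⟩
  · intro h
    have h0 := congrFun ((hmain ((Real.pi / 2) / ω)).symm.trans ((h ((Real.pi / 2) / ω) 0).trans (hmain 0))) 0
    have hωt : ω * ((Real.pi / 2) / ω) = Real.pi / 2 := by field_simp
    simp only [hωt, Real.sin_pi_div_two, mul_zero, Real.sin_zero] at h0
    simp only [Matrix.smul_cons, Matrix.cons_val_zero, smul_eq_mul, mul_one, mul_zero,
      Matrix.smul_empty] at h0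
    have h0' : (-ω / 2) * (-(μ₁ * Real.sinh (2 * α₁) - μ₂ * Real.sinh (2 * α₂))) = 0 := by
      linarith [h0]
    rcases mul_eq_zero.mp h0' with h | h
    · exact absurd (by linarith : ω = 0) hω
    · linarith
  · intro h t s
    rw [hmain t, hmain s, h]
    funext i
    fin_cases i <;> simp
end

section
/- Let α₁, α₂ ∈ (0, ∞), ω ≠ 0, μ₁, μ₂ > 0, K = diag(1,1,-1). Define the hyperbolic rotation B(s) = [[cosh s, 0, sinh s],[0,1,0],[sinh s, 0, cosh s]] and set q₁(t) = B(ωt)·(0, -sinh α₁, cosh α₁)ᵀ, q₂(t) = B(ωt)·(0, sinh α₂, cosh α₂)ᵀ. Then J(t) = μ₁ (K q₁(t)) × (K q̇₁(t)) + μ₂ (K q₂(t)) × (K q̇₂(t)) is constant in t if and only if μ₁ sinh 2α₁ = μ₂ sinh 2α₂. -/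
open Real Matrix

private lemma hasDerivAt_aux (ω c m t : ℝ) :
    HasDerivAt (fun t : ℝ => ![Real.sinh (ω*t) * c, m, Real.cosh (ω*t) * c])
      ![ω * Real.cosh (ω*t) * c, 0, ω * Real.sinh (ω*t) * c] t := by
  rw [hasDerivAt_pi]
  intro i
  have h : HasDerivAt (fun t : ℝ => ω * t) ω t := by
    simpa using (hasDerivAt_id t).const_mul ω
  fin_cases i
  · simpa using (h.sinh.mul_const c).congr_deriv (by ring)
  · simpa using hasDerivAt_const t m
  · simpa using (h.cosh.mul_const c).congr_deriv (by ring)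

/-- Conservation criterion for the momentum along hyperbolic relative
equilibria of the two-body problem on the hyperboloid. -/
theorem momentum_hyperbolic_rotation (μ₁ μ₂ α₁ α₂ ω : ℝ)
    (hμ₁ : 0 < μ₁) (hμ₂ : 0 < μ₂)
    (hα₁ : 0 < α₁) (hα₂ : 0 < α₂) (hω : ω ≠ 0) :
    let K : Matrix (Fin 3) (Fin 3) ℝ := Matrix.diagonal ![1, 1, -1]
    let B : ℝ → Matrix (Fin 3) (Fin 3) ℝ := fun s =>
      !![Real.cosh s, 0, Real.sinh s; 0, 1, 0; Real.sinh s, 0, Real.cosh s]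
    let q₁ : ℝ → Fin 3 → ℝ := fun t => (B (ω * t)).mulVec ![0, -Real.sinh α₁, Real.cosh α₁]
    let q₂ : ℝ → Fin 3 → ℝ := fun t => (B (ω * t)).mulVec ![0, Real.sinh α₂, Real.cosh α₂]
    let J : ℝ → Fin 3 → ℝ := fun t =>
      μ₁ • ((K.mulVec (q₁ t)) ⨯₃ (K.mulVec (deriv q₁ t))) +
      μ₂ • ((K.mulVec (q₂ t)) ⨯₃ (K.mulVec (deriv q₂ t)))
    (∀ t s : ℝ, J t = J s) ↔
      μ₁ * Real.sinh (2 * α₁) = μ₂ * Real.sinh (2 * α₂) := by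
  intro K B q₁ q₂ J
  have hq₁e : q₁ = fun t => ![Real.sinh (ω*t) * Real.cosh α₁, -Real.sinh α₁,
      Real.cosh (ω*t) * Real.cosh α₁] := by
    funext t i
    fin_cases i <;>
      simp [q₁, B, Matrix.mulVec, dotProduct, Fin.sum_univ_three] <;> ring
  have hq₂e : q₂ = fun t => ![Real.sinh (ω*t) * Real.cosh α₂, Real.sinh α₂,
      Real.cosh (ω*t) * Real.cosh α₂] := by
    funext t i
    fin_cases i <;>
      simp [q₂, B, Matrix.mulVec, dotProduct, Fin.sum_univ_three] <;> ring
  have hd₁ : ∀ t, deriv q₁ t =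
      ![ω * Real.cosh (ω*t) * Real.cosh α₁, 0, ω * Real.sinh (ω*t) * Real.cosh α₁] := by
    intro t; rw [hq₁e]; exact (hasDerivAt_aux ω (Real.cosh α₁) (-Real.sinh α₁) t).deriv
  have hd₂ : ∀ t, deriv q₂ t =
      ![ω * Real.cosh (ω*t) * Real.cosh α₂, 0, ω * Real.sinh (ω*t) * Real.cosh α₂] := by
    intro t; rw [hq₂e]; exact (hasDerivAt_aux ω (Real.cosh α₂) (Real.sinh α₂) t).deriv
  have hJ : ∀ t, J t =
      ![ω * (μ₁ * Real.sinh α₁ * Real.cosh α₁ - μ₂ * Real.sinh α₂ * Real.cosh α₂)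
          * Real.sinh (ω*t),
        -(ω * (μ₁ * Real.cosh α₁ ^ 2 + μ₂ * Real.cosh α₂ ^ 2)),
        ω * (μ₁ * Real.sinh α₁ * Real.cosh α₁ - μ₂ * Real.sinh α₂ * Real.cosh α₂)
          * Real.cosh (ω*t)] := by
    intro t
    have Kv : ∀ v : Fin 3 → ℝ, K.mulVec v = ![v 0, v 1, -(v 2)] := by
      intro v; funext i; fin_cases i <;>
        simp [K, Matrix.mulVec_diagonal]
    have h1 : Real.cosh (ω*t) ^ 2 = Real.sinh (ω*t) ^ 2 + 1 := Real.cosh_sq (ω*t)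
    simp only [J]
    rw [hd₁ t, hd₂ t, hq₁e, hq₂e]
    simp only [Kv, cross_apply, Matrix.cons_val_zero, Matrix.cons_val_one,
      Matrix.head_cons, Matrix.cons_val_two, Matrix.tail_cons]
    funext i
    fin_cases i
    · simp [Matrix.smul_cons, smul_eq_mul, Matrix.smul_empty]
      ring
    · simp [Matrix.smul_cons, smul_eq_mul, Matrix.smul_empty]
      linear_combination (-(ω * μ₁ * Real.cosh α₁ ^ 2) - ω * μ₂ * Real.cosh α₂ ^ 2) * h1
    · simp [Matrix.smul_cons, smul_eq_mul, Matrix.smul_empty]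
      ring
  have key : Real.sinh (2*α₁) = 2 * Real.sinh α₁ * Real.cosh α₁ := Real.sinh_two_mul α₁
  have key2 : Real.sinh (2*α₂) = 2 * Real.sinh α₂ * Real.cosh α₂ := Real.sinh_two_mul α₂
  constructor
  · intro h
    have h0 := congrFun (h (1/ω) 0) 0
    rw [hJ, hJ] at h0
    simp only [Matrix.cons_val_zero] at h0
    have hω1 : ω * (1/ω) = 1 := by field_simp
    rw [hω1, mul_zero, Real.sinh_zero, mul_zero] at h0
    have hs1 : Real.sinh 1 ≠ 0 := by
      have := Real.sinh_pos_iff.mpr (by norm_num : (0:ℝ) < 1); linarith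
    have hD : μ₁ * Real.sinh α₁ * Real.cosh α₁ - μ₂ * Real.sinh α₂ * Real.cosh α₂ = 0 := by
      rcases mul_eq_zero.mp h0 with h' | h'
      · rcases mul_eq_zero.mp h' with h'' | h''
        · exact absurd h'' hω
        · exact h''
      · exact absurd h' hs1
    rw [key, key2]; linarith
  · intro h t s
    have hD : μ₁ * Real.sinh α₁ * Real.cosh α₁ - μ₂ * Real.sinh α₂ * Real.cosh α₂ = 0 := by
      rw [key, key2] at h; linarith
    rw [hJ, hJ, hD]
    simp
end

section
/- Let μ₁, μ₂ > 0 and define f(κ, r₂) implicitly for fixed r₁ = 1 as follows: rule C1 gives μ₁ sin(√κ) = μ₂ sin(√κ r₂) for κ > 0; rule C2 gives μ₁ = μ₂ r₂; rule C3 gives μ₁ sin(2√κ) = μ₂ sin(2√κ r₂) for κ > 0. If μ₁ ≠ μ₂ and r₂ > 0 satisfies any two of these three relations simultaneously for some κ > 0 with √κ(1 + r₂) < π/2, then a contradiction follows; the three rules coincide only in the limit κ = 0. -/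
open Real

lemma sin_mul_gt (t r : ℝ) (ht : 0 < t) (ht' : t ≤ π) (hr : 0 < r) (hr1 : r < 1) :
    r * Real.sin t < Real.sin (r * t) := by
  have h := strictConcaveOn_sin_Icc.2
    (Set.mem_Icc.mpr ⟨le_refl (0:ℝ), Real.pi_pos.le⟩)
    (Set.mem_Icc.mpr ⟨ht.le, ht'⟩) ht.ne
    (show (0:ℝ) < 1 - r by linarith) hr (by ring)
  simpa [smul_eq_mul] using h

lemma scale_eq_one (t r : ℝ) (ht : 0 < t) (ht' : t ≤ π) (hrt : r * t ≤ π)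
    (hr : 0 < r) (heq : Real.sin (r * t) = r * Real.sin t) : r = 1 := by
  rcases lt_trichotomy r 1 with h | h | h
  · exact absurd heq (by have := sin_mul_gt t r ht ht' hr h; linarith)
  · exact h
  · have h1r : (0:ℝ) < 1 / r := by positivity
    have h1r1 : 1 / r < 1 := by
      rw [div_lt_one hr]; linarith
    have hrtpos : 0 < r * t := by positivity
    have h2 := sin_mul_gt (r * t) (1 / r) hrtpos hrt h1r h1r1
    have hx : (1 / r) * (r * t) = t := by field_simp
    rw [hx, heq] at h2
    have hx2 : (1 / r) * (r * Real.sin t) = Real.sin t := by field_simp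
    rw [hx2] at h2
    exact absurd h2 (lt_irrefl _)
  
/-- For distinct masses, with `r₁ = 1` and an acute arc on a sphere of
curvature `κ > 0`, no two of the three centre-of-mass rules C1, C2, C3 can
hold simultaneously. -/
theorem three_rules_pairwise_incompatible (μ₁ μ₂ r₂ κ : ℝ)
    (hμ₁ : 0 < μ₁) (hμ₂ : 0 < μ₂) (hμ : μ₁ ≠ μ₂)
    (hr₂ : 0 < r₂) (hκ : 0 < κ)
    (hacute : Real.sqrt κ * (1 + r₂) < π / 2) :
    (μ₁ * Real.sin (Real.sqrt κ) = μ₂ * Real.sin (Real.sqrt κ * r₂) →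
      μ₁ = μ₂ * r₂ → False) ∧
    (μ₁ * Real.sin (Real.sqrt κ) = μ₂ * Real.sin (Real.sqrt κ * r₂) →
      μ₁ * Real.sin (2 * Real.sqrt κ) = μ₂ * Real.sin (2 * Real.sqrt κ * r₂) → False) ∧
    (μ₁ = μ₂ * r₂ →
      μ₁ * Real.sin (2 * Real.sqrt κ) = μ₂ * Real.sin (2 * Real.sqrt κ * r₂) → False) := by
  set s := Real.sqrt κ with hs
  have hspos : 0 < s := Real.sqrt_pos.mpr hκ
  have hslt : s < π / 2 := by nlinarith
  have hsr : s * r₂ < π / 2 := by nlinarith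
  have hsr_pos : 0 < s * r₂ := by positivity
  have hpi : 0 < π := Real.pi_pos
  have hsin_s : 0 < Real.sin s := Real.sin_pos_of_pos_of_lt_pi hspos (by linarith)
  have hsin_sr : 0 < Real.sin (s * r₂) := Real.sin_pos_of_pos_of_lt_pi hsr_pos (by linarith)
  refine ⟨?_, ?_, ?_⟩
  · intro h1 h2
    -- r₂ * sin s = sin (s * r₂)
    have heq : Real.sin (r₂ * s) = r₂ * Real.sin s := by
      have : μ₂ * r₂ * Real.sin s = μ₂ * Real.sin (s * r₂) := by rw [← h2]; exact h1
      have h := mul_left_cancel₀ (ne_of_gt hμ₂) (by linarith [this] : μ₂ * (r₂ * Real.sin s) = μ₂ * Real.sin (s * r₂))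
      rw [mul_comm r₂ s]; linarith
    have hr1 : r₂ = 1 := scale_eq_one s r₂ hspos (by linarith) (by rw [mul_comm]; linarith) hr₂ heq
    rw [hr1, mul_one] at h2
    exact hμ h2
  · intro h1 h3
    have e2s : Real.sin (2 * s) = 2 * Real.sin s * Real.cos s := Real.sin_two_mul s
    have e2sr : Real.sin (2 * s * r₂) = 2 * Real.sin (s * r₂) * Real.cos (s * r₂) := by
      rw [mul_assoc, Real.sin_two_mul]
    rw [e2s, e2sr] at h3
    -- substitute h1
    have hcos : Real.cos s = Real.cos (s * r₂) := by
      have : μ₂ * Real.sin (s * r₂) * (2 * Real.cos s) =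
          μ₂ * Real.sin (s * r₂) * (2 * Real.cos (s * r₂)) := by
        linear_combination h3 - 2 * Real.cos s * h1
      have hne : μ₂ * Real.sin (s * r₂) ≠ 0 := by positivity
      have := mul_left_cancel₀ hne this
      linarith
    have hseq : s = s * r₂ := Real.injOn_cos
      (Set.mem_Icc.mpr ⟨hspos.le, by linarith⟩)
      (Set.mem_Icc.mpr ⟨hsr_pos.le, by linarith⟩) hcos
    have hr1 : r₂ = 1 := by
      have : s * 1 = s * r₂ := by rw [mul_one]; exact hseq
      exact (mul_left_cancel₀ (ne_of_gt hspos) this).symm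
    rw [← hseq] at h1
    exact hμ (mul_right_cancel₀ (ne_of_gt hsin_s) h1)
  · intro h2 h3
    have h2spos : 0 < 2 * s := by linarith
    have h2slt : 2 * s ≤ π := by linarith
    have h2srlt : r₂ * (2 * s) ≤ π := by nlinarith
    have heq : Real.sin (r₂ * (2 * s)) = r₂ * Real.sin (2 * s) := by
      have h3' : μ₂ * r₂ * Real.sin (2 * s) = μ₂ * Real.sin (2 * s * r₂) := by
        rw [← h2]; exact h3
      have : μ₂ * (r₂ * Real.sin (2 * s)) = μ₂ * Real.sin (r₂ * (2 * s)) := by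
        rw [show r₂ * (2 * s) = 2 * s * r₂ by ring]; linarith
      have := mul_left_cancel₀ (ne_of_gt hμ₂) this
      linarith
    have hr1 : r₂ = 1 := scale_eq_one (2 * s) r₂ h2spos h2slt h2srlt hr₂ heq
    rw [hr1, mul_one] at h2
    exact hμ h2
end
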